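/- Let 𝔛 be a Hilbert module over a unital C*-algebra 𝔄 and e₁,…,e_m ∈ 𝔛 with ⟨eᵢ,eⱼ⟩ = 0 for i ≠ j and ‖eₖ‖ = 1. Suppose r_k, ρ_k ∈ [0,∞) and x₁,…,xₙ ∈ 𝔛 satisfy r_k‖xⱼ‖·1 ≤ Re⟨eₖ,xⱼ⟩ and ρ_k‖xⱼ‖·1 ≤ Im⟨eₖ,xⱼ⟩ in 𝔄 for all j,k. Then (∑ₖ (r_k² + ρ_k²)) · (∑ⱼ‖xⱼ‖)² · 1 ≤ |∑ⱼ xⱼ|² in the order of 𝔄, and hence (∑ₖ(r_k²+ρ_k²))^{1/2} ∑ⱼ‖xⱼ‖·1 ≤ |∑ⱼ xⱼ|. -/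

import Mathlib

open scoped RightActions

/-- Hermitian real part of an element of a complex *-algebra. -/
noncomputable def cre {A : Type*} [Ring A] [StarRing A] [Module ℂ A] (a : A) : A :=
  (2 : ℂ)⁻¹ • (a + star a)

/-- Hermitian imaginary part of an element of a complex *-algebra. -/
noncomputable def cim {A : Type*} [Ring A] [StarRing A] [Module ℂ A] (a : A) : A :=
  (2 * Complex.I)⁻¹ • (a - star a)

/-- Hilbert C⋆-module with a *right* `A`-action (the convention of Mathlib in December 2024;
Mathlib's current `CStarModule` uses a left action `SMul A E` instead). -/
class CStarModuleOp (A : outParam <| Type*) (E : Type*) [NonUnitalSemiring A] [StarRing A]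
    [Module ℂ A] [AddCommGroup E] [Module ℂ E] [PartialOrder A] [SMul Aᵐᵒᵖ E] [Norm A] [Norm E]
    extends Inner A E where
  inner_add_right {x} {y} {z} : inner x (y + z) = inner x y + inner x z
  inner_self_nonneg {x} : 0 ≤ inner x x
  inner_self {x} : inner x x = 0 ↔ x = 0
  inner_op_smul_right {a : A} {x y : E} : inner x (y <• a) = inner x y * a
  inner_smul_right_complex {z : ℂ} {x} {y} : inner x (z • y) = z • inner x y
  star_inner x y : star (inner x y) = inner y x
  norm_eq_sqrt_norm_inner_self x : ‖x‖ = √‖inner x x‖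

theorem CStarModuleOp.norm_nonneg {A E : Type*} [CStarAlgebra A] [PartialOrder A]
    [AddCommGroup E] [Module ℂ E] [SMul Aᵐᵒᵖ E] [Norm E] [CStarModuleOp A E] {x : E} :
    0 ≤ ‖x‖ := by
  rw [CStarModuleOp.norm_eq_sqrt_norm_inner_self (A := A) x]; exact Real.sqrt_nonneg _

theorem CStarModuleOp.norm_sq_eq {A E : Type*} [CStarAlgebra A] [PartialOrder A]
    [AddCommGroup E] [Module ℂ E] [SMul Aᵐᵒᵖ E] [Norm E] [CStarModuleOp A E] {x : E} :
    ‖x‖ ^ 2 = ‖inner A x x‖ := by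
  rw [CStarModuleOp.norm_eq_sqrt_norm_inner_self (A := A) x, Real.sq_sqrt (_root_.norm_nonneg _)]

theorem CStarModuleOp.isSelfAdjoint_inner_self {A E : Type*} [CStarAlgebra A] [PartialOrder A]
    [AddCommGroup E] [Module ℂ E] [SMul Aᵐᵒᵖ E] [Norm E] [CStarModuleOp A E] {x : E} :
    IsSelfAdjoint (inner A x x) :=
  CStarModuleOp.star_inner x x

theorem CStarModuleOp.inner_zero_right' {A E : Type*} [CStarAlgebra A] [PartialOrder A]
    [AddCommGroup E] [Module ℂ E] [SMul Aᵐᵒᵖ E] [Norm E] [CStarModuleOp A E] (x : E) :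
    inner A x (0 : E) = 0 := by
  have h := CStarModuleOp.inner_add_right (A := A) (x := x) (y := (0 : E)) (z := 0)
  simpa using h

def CStarModuleOp.innerR {A E : Type*} [CStarAlgebra A] [PartialOrder A]
    [AddCommGroup E] [Module ℂ E] [SMul Aᵐᵒᵖ E] [Norm E] [CStarModuleOp A E] (x : E) :
    E →+ A where
  toFun y := inner A x y
  map_zero' := CStarModuleOp.inner_zero_right' x
  map_add' _ _ := CStarModuleOp.inner_add_right

theorem CStarModuleOp.inner_sum_right {A E : Type*} [CStarAlgebra A] [PartialOrder A]
    [AddCommGroup E] [Module ℂ E] [SMul Aᵐᵒᵖ E] [Norm E] [CStarModuleOp A E]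
    {ι : Type*} {s : Finset ι} {x : E} {y : ι → E} :
    inner A x (∑ i ∈ s, y i) = ∑ i ∈ s, inner A x (y i) :=
  map_sum (CStarModuleOp.innerR (A := A) x) y s

theorem CStarModuleOp.inner_sum_left {A E : Type*} [CStarAlgebra A] [PartialOrder A]
    [AddCommGroup E] [Module ℂ E] [SMul Aᵐᵒᵖ E] [Norm E] [CStarModuleOp A E]
    {ι : Type*} {s : Finset ι} {x : E} {y : ι → E} :
    inner A (∑ i ∈ s, y i) x = ∑ i ∈ s, inner A (y i) x := by
  rw [← CStarModuleOp.star_inner x, CStarModuleOp.inner_sum_right, star_sum]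
  exact Finset.sum_congr rfl fun i _ => CStarModuleOp.star_inner x (y i)

theorem CStarModuleOp.inner_op_smul_left {A E : Type*} [CStarAlgebra A] [PartialOrder A]
    [AddCommGroup E] [Module ℂ E] [SMul Aᵐᵒᵖ E] [Norm E] [CStarModuleOp A E]
    {a : A} {x y : E} : inner A (x <• a) y = star a * inner A x y := by
  rw [← CStarModuleOp.star_inner y, CStarModuleOp.inner_op_smul_right, star_mul,
    CStarModuleOp.star_inner]

theorem CStarModuleOp.inner_sub_right {A E : Type*} [CStarAlgebra A] [PartialOrder A]
    [AddCommGroup E] [Module ℂ E] [SMul Aᵐᵒᵖ E] [Norm E] [CStarModuleOp A E]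
    {x y z : E} : inner A x (y - z) = inner A x y - inner A x z :=
  map_sub (CStarModuleOp.innerR (A := A) x) y z

theorem CStarModuleOp.inner_sub_left {A E : Type*} [CStarAlgebra A] [PartialOrder A]
    [AddCommGroup E] [Module ℂ E] [SMul Aᵐᵒᵖ E] [Norm E] [CStarModuleOp A E]
    {x y z : E} : inner A (x - y) z = inner A x z - inner A y z := by
  rw [← CStarModuleOp.star_inner z, CStarModuleOp.inner_sub_right, star_sub,
    CStarModuleOp.star_inner, CStarModuleOp.star_inner]

private lemma quad_key {A : Type*} [CStarAlgebra A] {a : A} {t s : ℝ} :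
    star a * a = star (a - ((t : ℂ) + s * Complex.I) • 1) * (a - ((t : ℂ) + s * Complex.I) • 1)
      + (2*t) • cre a + (2*s) • cim a - (t^2+s^2) • (1:A) := by
  have h1 : ∀ (r : ℝ) (v : A), r • v = (r : ℂ) • v := fun r v => by
    rw [← algebraMap_smul ℂ r v]; norm_num
  simp only [cre, cim, star_sub, star_smul, star_one, sub_mul, mul_sub,
    smul_mul_assoc, mul_smul_comm, mul_one, one_mul, smul_smul, star_star, h1,
    map_add, map_mul, Complex.conj_I, Complex.conj_ofReal]
  match_scalars <;> simp [Complex.ext_iff, ← Complex.ofReal_pow] <;> try (constructor <;> ring)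

private lemma quad_lower {A : Type*} [CStarAlgebra A] [PartialOrder A] [StarOrderedRing A]
    {a : A} {t s : ℝ} (ht : 0 ≤ t) (hs : 0 ≤ s)
    (h1 : t • (1:A) ≤ cre a) (h2 : s • (1:A) ≤ cim a) :
    (t^2 + s^2) • (1:A) ≤ star a * a := by
  have key := quad_key (A := A) (a := a) (t := t) (s := s)
  have hb : (0:A) ≤ star (a - ((t : ℂ) + s * Complex.I) • 1) *
      (a - ((t : ℂ) + s * Complex.I) • 1) := star_mul_self_nonneg _
  have e1 : (2*t^2) • (1:A) ≤ (2*t) • cre a := by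
    have h := smul_le_smul_of_nonneg_left h1 (by positivity : (0:ℝ) ≤ 2*t)
    rw [smul_smul] at h
    convert h using 2
    ring
  have e2 : (2*s^2) • (1:A) ≤ (2*s) • cim a := by
    have h := smul_le_smul_of_nonneg_left h2 (by positivity : (0:ℝ) ≤ 2*s)
    rw [smul_smul] at h
    convert h using 2
    ring
  calc (t^2 + s^2) • (1:A)
      = 0 + (2*t^2) • (1:A) + (2*s^2) • (1:A) - (t^2+s^2) • (1:A) := by module
    _ ≤ star (a - ((t : ℂ) + s * Complex.I) • 1) * (a - ((t : ℂ) + s * Complex.I) • 1)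
        + (2*t) • cre a + (2*s) • cim a - (t^2+s^2) • (1:A) := by
        gcongr
    _ = star a * a := key.symm

private lemma scalar_le_of_sq_le {A : Type*} [CStarAlgebra A] [PartialOrder A]
    [StarOrderedRing A] {d : A} (hd : 0 ≤ d) {t : ℝ} (ht : 0 ≤ t)
    (h : (t^2) • (1:A) ≤ d^2) : t • (1:A) ≤ d := by
  rw [← Algebra.algebraMap_eq_smul_one] at h ⊢
  rw [algebraMap_le_iff_le_spectrum (R := ℝ) (IsSelfAdjoint.of_nonneg hd)]
  intro y hy
  have hy0 : 0 ≤ y := spectrum_nonneg_of_nonneg hd hy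
  have h2 : y^2 ∈ spectrum ℝ (d^2) := by
    have hm := cfc_map_spectrum (R := ℝ) (· ^ 2) d (IsSelfAdjoint.of_nonneg hd)
    rw [cfc_pow_id (R := ℝ) d] at hm
    rw [hm]
    exact ⟨y, hy, rfl⟩
  have := (algebraMap_le_iff_le_spectrum (R := ℝ)
    ((IsSelfAdjoint.of_nonneg hd).pow 2)).mp h _ h2
  nlinarith

theorem stmt7 {A E : Type*} [CStarAlgebra A] [PartialOrder A] [StarOrderedRing A]
    [AddCommGroup E] [Module ℂ E] [SMul Aᵐᵒᵖ E] [Norm E] [CStarModuleOp A E]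
    (m n : ℕ) (e : Fin m → E) (x : Fin n → E)
    (horth : ∀ i j, i ≠ j → (inner A (e i) (e j) : A) = 0) (hnorm : ∀ k, ‖e k‖ = 1)
    (r ρ : Fin m → ℝ) (hr : ∀ k, 0 ≤ r k) (hρ : ∀ k, 0 ≤ ρ k)
    (h₁ : ∀ j k, (r k * ‖x j‖) • (1 : A) ≤ cre (inner A (e k) (x j) : A))
    (h₂ : ∀ j k, (ρ k * ‖x j‖) • (1 : A) ≤ cim (inner A (e k) (x j) : A)) :
    ((∑ k, (r k ^ 2 + ρ k ^ 2)) * (∑ j, ‖x j‖) ^ 2) • (1 : A) ≤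
        (inner A (∑ j, x j) (∑ j, x j) : A) ∧
      (Real.sqrt (∑ k, (r k ^ 2 + ρ k ^ 2)) * ∑ j, ‖x j‖) • (1 : A) ≤
        CFC.sqrt (inner A (∑ j, x j) (∑ j, x j) : A) := by
  set X : E := ∑ j, x j with hX
  set S : ℝ := ∑ j, ‖x j‖ with hS
  have hS0 : 0 ≤ S := Finset.sum_nonneg fun j _ => CStarModuleOp.norm_nonneg (A := A)
  set a : Fin m → A := fun k => (inner A (e k) X : A) with ha
  -- ⟨e k, e k⟩ ≤ 1
  have he1 : ∀ k, (inner A (e k) (e k) : A) ≤ 1 := by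
    intro k
    have hsa : IsSelfAdjoint (inner A (e k) (e k) : A) := CStarModuleOp.isSelfAdjoint_inner_self
    have h := hsa.le_algebraMap_norm_self
    have hn : ‖(inner A (e k) (e k) : A)‖ = 1 := by
      have h2 := CStarModuleOp.norm_sq_eq (A := A) (x := e k)
      rw [hnorm k] at h2
      simpa using h2.symm
    rwa [hn, map_one] at h
  -- Bessel inequality
  set y : E := ∑ k, (e k) <• (a k) with hy
  have inner_Xy : (inner A X y : A) = ∑ k, star (a k) * a k := by
    rw [hy, CStarModuleOp.inner_sum_right]
    refine Finset.sum_congr rfl fun k _ => ?_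
    rw [CStarModuleOp.inner_op_smul_right, ← CStarModuleOp.star_inner]
  have inner_yX : (inner A y X : A) = ∑ k, star (a k) * a k := by
    rw [← CStarModuleOp.star_inner, inner_Xy, star_sum]
    refine Finset.sum_congr rfl fun k _ => ?_
    rw [star_mul, star_star]
  have inner_yy_le : (inner A y y : A) ≤ ∑ k, star (a k) * a k := by
    have hyy : (inner A y y : A) = ∑ k, star (a k) * (inner A (e k) (e k) : A) * a k := by
      rw [hy, CStarModuleOp.inner_sum_left]
      refine Finset.sum_congr rfl fun k _ => ?_
      rw [CStarModuleOp.inner_sum_right]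
      rw [Finset.sum_eq_single k]
      · rw [CStarModuleOp.inner_op_smul_right, CStarModuleOp.inner_op_smul_left, mul_assoc]
      · intro l _ hl
        rw [CStarModuleOp.inner_op_smul_right, CStarModuleOp.inner_op_smul_left,
          horth k l (Ne.symm hl)]
        simp
      · simp
    rw [hyy]
    refine Finset.sum_le_sum fun k _ => ?_
    have := star_left_conjugate_le_conjugate (he1 k) (a k)
    simpa using this
  have bessel : ∑ k, star (a k) * a k ≤ (inner A X X : A) := by
    have h0 : (0:A) ≤ inner A (X - y) (X - y) := CStarModuleOp.inner_self_nonneg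
    have expand : (inner A (X - y) (X - y) : A) =
        (inner A X X : A) - ((inner A X y : A) + (inner A y X : A) - (inner A y y : A)) := by
      simp only [CStarModuleOp.inner_sub_left, CStarModuleOp.inner_sub_right]
      abel
    have h1' : (inner A X y : A) + (inner A y X : A) - (inner A y y : A) ≤ (inner A X X : A) :=
      sub_nonneg.mp (by rw [← expand]; exact h0)
    calc ∑ k, star (a k) * a k
        = (∑ k, star (a k) * a k) + (∑ k, star (a k) * a k) - (∑ k, star (a k) * a k) := by abel
      _ ≤ (∑ k, star (a k) * a k) + (∑ k, star (a k) * a k) - (inner A y y : A) := by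
          gcongr
      _ = (inner A X y : A) + (inner A y X : A) - (inner A y y : A) := by rw [inner_Xy, inner_yX]
      _ ≤ (inner A X X : A) := h1'
  -- per-k lower bounds
  have hcre : ∀ k, (r k * S) • (1:A) ≤ cre (a k) := by
    intro k
    have hak : a k = ∑ j, (inner A (e k) (x j) : A) := by
      rw [ha, hX]; exact CStarModuleOp.inner_sum_right
    have hadd : cre (a k) = ∑ j, cre (inner A (e k) (x j) : A) := by
      rw [hak]
      simp [cre, star_sum, ← Finset.sum_add_distrib, Finset.smul_sum]
    have hlhs : (r k * S) • (1:A) = ∑ j, (r k * ‖x j‖) • (1:A) := by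
      rw [← Finset.sum_smul, hS, Finset.mul_sum]
    rw [hadd, hlhs]
    exact Finset.sum_le_sum fun j _ => h₁ j k
  have hcim : ∀ k, (ρ k * S) • (1:A) ≤ cim (a k) := by
    intro k
    have hak : a k = ∑ j, (inner A (e k) (x j) : A) := by
      rw [ha, hX]; exact CStarModuleOp.inner_sum_right
    have hadd : cim (a k) = ∑ j, cim (inner A (e k) (x j) : A) := by
      rw [hak]
      simp [cim, star_sum, ← Finset.sum_sub_distrib, Finset.smul_sum]
    have hlhs : (ρ k * S) • (1:A) = ∑ j, (ρ k * ‖x j‖) • (1:A) := by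
      rw [← Finset.sum_smul, hS, Finset.mul_sum]
    rw [hadd, hlhs]
    exact Finset.sum_le_sum fun j _ => h₂ j k
  have perk : ∀ k, ((r k ^ 2 + ρ k ^ 2) * S ^ 2) • (1:A) ≤ star (a k) * a k := by
    intro k
    have h := quad_lower (mul_nonneg (hr k) hS0) (mul_nonneg (hρ k) hS0) (hcre k) (hcim k)
    have hsc : (r k ^ 2 + ρ k ^ 2) * S ^ 2 = (r k * S)^2 + (ρ k * S)^2 := by ring
    rw [hsc]
    exact h
  have main : ((∑ k, (r k ^ 2 + ρ k ^ 2)) * S ^ 2) • (1 : A) ≤ (inner A X X : A) := by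
    calc ((∑ k, (r k ^ 2 + ρ k ^ 2)) * S ^ 2) • (1 : A)
        = ∑ k, ((r k ^ 2 + ρ k ^ 2) * S ^ 2) • (1:A) := by
          rw [← Finset.sum_smul, Finset.sum_mul]
      _ ≤ ∑ k, star (a k) * a k := Finset.sum_le_sum fun k _ => perk k
      _ ≤ (inner A X X : A) := bessel
  refine ⟨main, ?_⟩
  set c : ℝ := ∑ k, (r k ^ 2 + ρ k ^ 2) with hc
  have hc0 : 0 ≤ c := Finset.sum_nonneg fun k _ => by positivity
  have hd0 : (0:A) ≤ CFC.sqrt (inner A X X : A) := CFC.sqrt_nonneg _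
  refine scalar_le_of_sq_le hd0 (by positivity) ?_
  rw [CFC.sq_sqrt (inner A X X : A) CStarModuleOp.inner_self_nonneg]
  have : (Real.sqrt c * S)^2 = c * S^2 := by
    rw [mul_pow, Real.sq_sqrt hc0]
  rw [this]
  exact main
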